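/- For p ≥ 2, if X is a real random variable with E[X] = 0 and E[|X|^p] < ∞, then there exists a constant C_p depending only on p such that the average X̄_N of N i.i.d. copies of X satisfies E[|X̄_N|^p] ≤ C_p N^{-p/2} E[|X|^p]. -/

import Mathlib

open MeasureTheory ProbabilityTheory Real Set


lemma bdg_taylor {p : ℝ} (hp : 2 ≤ p) {t : ℝ} (h1 : -1 ≤ t) (h2 : t ≤ 1) :
    (1 + t) ^ p ≤ 1 + p * t + (p * (p - 1) * 2 ^ p) * t ^ 2 := by
  set D : ℝ := p * (p - 1) * 2 ^ p with hD
  have hp0 : (0:ℝ) < p := by linarith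
  have hD0 : 0 < D := by
    have : (0:ℝ) < (2:ℝ) ^ p := Real.rpow_pos_of_pos (by norm_num) p
    have : (0:ℝ) < p * (p-1) := by nlinarith
    positivity
  set f : ℝ → ℝ := fun t => 1 + p * t + D * t ^ 2 - (1 + t) ^ p with hf
  set g : ℝ → ℝ := fun t => p + 2 * D * t - p * (1 + t) ^ (p - 1) with hg
  have hderf : ∀ t : ℝ, HasDerivAt f (g t) t := by
    intro t
    have h1d : HasDerivAt (fun t : ℝ => 1 + t) 1 t := (hasDerivAt_id t).const_add 1
    have hpow : HasDerivAt (fun t : ℝ => (1 + t) ^ p) (1 * p * (1 + t) ^ (p - 1)) t :=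
      h1d.rpow_const (p := p) (Or.inr (by linarith))
    have : HasDerivAt (fun t : ℝ => 1 + p * t + D * t ^ 2)
        (p + 2 * D * t) t := by
      have := (((hasDerivAt_id t).const_mul p).const_add 1).add
        (((hasDerivAt_pow 2 t)).const_mul D)
      simpa [Pi.add_def, mul_comm, mul_assoc, mul_left_comm] using this
    simpa [Pi.sub_def, hg, mul_one] using this.sub hpow
  have hderg : ∀ t : ℝ, HasDerivAt g (2 * D - p * ((p - 1) * (1 + t) ^ (p - 2) * 1)) t := by
    intro t
    have h1d : HasDerivAt (fun t : ℝ => 1 + t) 1 t := (hasDerivAt_id t).const_add 1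
    have hpow : HasDerivAt (fun t : ℝ => (1 + t) ^ (p - 1))
        (1 * (p - 1) * (1 + t) ^ (p - 1 - 1)) t :=
      h1d.rpow_const (p := p - 1) (Or.inr (by linarith))
    have hpow' : HasDerivAt (fun t : ℝ => (1 + t) ^ (p - 1))
        ((p - 1) * (1 + t) ^ (p - 2) * 1) t := by
      have : p - 1 - 1 = p - 2 := by ring
      rw [this] at hpow
      convert hpow using 1; ring
    have hlin : HasDerivAt (fun t : ℝ => p + 2 * D * t) (2 * D) t := by
      simpa using ((hasDerivAt_id t).const_mul (2 * D)).const_add p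
    simpa [Pi.sub_def, hg] using hlin.sub (hpow'.const_mul p)
  -- g is monotone on [-1, 1]
  have hgmono : MonotoneOn g (Icc (-1 : ℝ) 1) := by
    apply monotoneOn_of_deriv_nonneg (convex_Icc _ _)
      (fun t _ => ((hderg t).continuousAt.continuousWithinAt))
      (fun t _ => (hderg t).differentiableAt.differentiableWithinAt)
    · intro t ht
      rw [interior_Icc] at ht
      rw [(hderg t).deriv]
      have hb0 : (0:ℝ) ≤ 1 + t := by linarith [ht.1]
      have hb2 : 1 + t ≤ 2 := by linarith [ht.2]
      have h1 : (1 + t) ^ (p - 2) ≤ (2:ℝ) ^ (p - 2) :=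
        Real.rpow_le_rpow hb0 hb2 (by linarith)
      have h2 : (2:ℝ) ^ (p - 2) ≤ (2:ℝ) ^ p :=
        Real.rpow_le_rpow_of_exponent_le one_le_two (by linarith)
      have h3 : p * ((p - 1) * (1 + t) ^ (p - 2) * 1) ≤ D := by
        rw [hD]
        have hp1 : (0:ℝ) ≤ p * (p - 1) := by nlinarith
        have := mul_le_mul_of_nonneg_left (h1.trans h2) hp1
        nlinarith
      linarith
  have hg0 : g 0 = 0 := by simp [hg]
  -- f is antitone on [-1,0], monotone on [0,1]
  have hfc : ∀ s ∈ Icc (-1:ℝ) 1, ContinuousWithinAt f (Icc (-1:ℝ) 1) s :=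
    fun s _ => (hderf s).continuousAt.continuousWithinAt
  have hfanti : AntitoneOn f (Icc (-1:ℝ) 0) := by
    apply antitoneOn_of_deriv_nonpos (convex_Icc _ _)
      (fun s _ => (hderf s).continuousAt.continuousWithinAt)
      (fun s _ => (hderf s).differentiableAt.differentiableWithinAt)
    intro s hs
    rw [interior_Icc] at hs
    rw [(hderf s).deriv]
    have := hgmono (by constructor <;> [linarith [hs.1]; linarith [hs.2]] : s ∈ Icc (-1:ℝ) 1)
      (by norm_num : (0:ℝ) ∈ Icc (-1:ℝ) 1) (le_of_lt hs.2)
    linarith [hg0 ▸ this]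
  have hfmono : MonotoneOn f (Icc (0:ℝ) 1) := by
    apply monotoneOn_of_deriv_nonneg (convex_Icc _ _)
      (fun s _ => (hderf s).continuousAt.continuousWithinAt)
      (fun s _ => (hderf s).differentiableAt.differentiableWithinAt)
    intro s hs
    rw [interior_Icc] at hs
    rw [(hderf s).deriv]
    have := hgmono (by norm_num : (0:ℝ) ∈ Icc (-1:ℝ) 1)
      (by constructor <;> [linarith [hs.1]; linarith [hs.2]] : s ∈ Icc (-1:ℝ) 1) (le_of_lt hs.1)
    linarith [hg0 ▸ this]
  have hf0 : f 0 = 0 := by simp [hf]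
  have hft : 0 ≤ f t := by
    rcases le_total t 0 with h | h
    · have := hfanti (by exact ⟨h1, h⟩) (by norm_num : (0:ℝ) ∈ Icc (-1:ℝ) 0) h
      linarith [hf0 ▸ this]
    · have := hfmono (by norm_num : (0:ℝ) ∈ Icc (0:ℝ) 1) ⟨h, h2⟩ h
      linarith [hf0 ▸ this]
  simp only [hf] at hft
  linarith

lemma bdg_pointwise {p : ℝ} (hp : 2 ≤ p) (x y : ℝ) :
    |x + y| ^ p ≤ |x| ^ p + p * (|x| ^ (p - 2) * x) * y +
      (p * (p - 1) * 2 ^ p + 2 ^ p + p) * (|x| ^ (p - 2) * y ^ 2 + |y| ^ p) := by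
  have hp0 : (0:ℝ) < p := by linarith
  have h2p : (0:ℝ) < (2:ℝ) ^ p := Real.rpow_pos_of_pos (by norm_num) p
  have hF : (0:ℝ) ≤ p * (p - 1) * 2 ^ p := by
    apply mul_nonneg _ h2p.le; nlinarith
  rcases le_or_gt |x| |y| with hxy | hxy
  · -- |x| ≤ |y|
    rcases eq_or_ne y 0 with rfl | hy
    · have hx0 : x = 0 := by
        have := abs_nonneg x; have : |x| = 0 := le_antisymm (by simpa using hxy) (abs_nonneg x)
        exact abs_eq_zero.mp this
      subst hx0
      have h0p : (0:ℝ) ^ p = 0 := Real.zero_rpow (ne_of_gt hp0)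
      simp only [add_zero, abs_zero, mul_zero, zero_mul, zero_pow, h0p, ne_eq,
        OfNat.ofNat_ne_zero, not_false_eq_true, zero_add]
      positivity
    · have hy0 : 0 < |y| := abs_pos.mpr hy
      have keyA : |x + y| ^ p ≤ 2 ^ p * |y| ^ p := by
        have h1 : |x + y| ≤ 2 * |y| := by
          calc |x + y| ≤ |x| + |y| := abs_add_le x y
          _ ≤ 2 * |y| := by linarith
        calc |x + y| ^ p ≤ (2 * |y|) ^ p :=
              Real.rpow_le_rpow (abs_nonneg _) h1 (le_of_lt hp0)
        _ = 2 ^ p * |y| ^ p := Real.mul_rpow (by norm_num) (abs_nonneg _)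
      have sqy : |y| ^ (2:ℝ) = |y| * |y| := by
        rw [show (2:ℝ) = ((2:ℕ):ℝ) by norm_num, Real.rpow_natCast]; ring
      have hyp : |y| ^ (p - 2) * |y| * |y| = |y| ^ p := by
        rw [mul_assoc, ← sqy, ← Real.rpow_add hy0]; norm_num
      have keyB : |p * (|x| ^ (p - 2) * x) * y| ≤ p * |y| ^ p := by
        rw [abs_mul, abs_mul, abs_mul, abs_of_nonneg (le_of_lt hp0),
          abs_of_nonneg (Real.rpow_nonneg (abs_nonneg x) _)]
        have h1 : |x| ^ (p - 2) ≤ |y| ^ (p - 2) :=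
          Real.rpow_le_rpow (abs_nonneg _) hxy (by linarith)
        have := mul_le_mul (mul_le_mul h1 hxy (abs_nonneg x)
          (Real.rpow_nonneg (abs_nonneg y) _)) (le_refl |y|) (abs_nonneg y)
          (by positivity)
        rw [hyp] at this
        rw [mul_assoc]
        exact mul_le_mul_of_nonneg_left this (le_of_lt hp0)
      have keyB' : -(p * |y| ^ p) ≤ p * (|x| ^ (p - 2) * x) * y := neg_le_of_abs_le keyB
      have hC : (0:ℝ) ≤ |x| ^ p := Real.rpow_nonneg (abs_nonneg x) p
      have hD : (0:ℝ) ≤ |x| ^ (p - 2) * y ^ 2 := by positivity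
      have hE : (0:ℝ) ≤ |y| ^ p := Real.rpow_nonneg (abs_nonneg y) p
      have hFE : (0:ℝ) ≤ (p * (p - 1) * 2 ^ p) * |y| ^ p := mul_nonneg hF hE
      have hCD : (0:ℝ) ≤ (p * (p - 1) * 2 ^ p + 2 ^ p + p) * (|x| ^ (p - 2) * y ^ 2) := by
        apply mul_nonneg (by linarith) hD
      nlinarith [keyA, keyB', hC, hCD, hFE]
  · -- |y| < |x|, so x ≠ 0
    have hx : x ≠ 0 := by intro h; rw [h, abs_zero] at hxy; linarith [abs_nonneg y]
    have hx0 : 0 < |x| := abs_pos.mpr hx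
    set t : ℝ := y / x with ht
    have htabs : |t| < 1 := by
      rw [ht, abs_div]
      rw [div_lt_one hx0]; exact hxy
    have ht1 : -1 ≤ t := by cases' abs_lt.mp htabs with h _; linarith
    have ht2 : t ≤ 1 := le_of_lt (abs_lt.mp htabs).2
    have h1t : 0 ≤ 1 + t := by linarith
    have hxyt : x + y = x * (1 + t) := by rw [ht]; field_simp
    have e1 : |x + y| ^ p = |x| ^ p * (1 + t) ^ p := by
      rw [hxyt, abs_mul, abs_of_nonneg h1t, Real.mul_rpow (abs_nonneg x) h1t]
    have hx2 : |x| ^ (p - 2) * x ^ 2 = |x| ^ p := by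
      rw [show x ^ 2 = |x| ^ (2:ℝ) by
        rw [show (2:ℝ) = ((2:ℕ):ℝ) by norm_num, Real.rpow_natCast]; exact (sq_abs x).symm]
      rw [← Real.rpow_add hx0]; norm_num
    have e2 : p * (|x| ^ (p - 2) * x) * y = p * (|x| ^ p * t) := by
      have : x * y = x ^ 2 * t := by rw [ht]; field_simp
      calc p * (|x| ^ (p - 2) * x) * y = p * (|x| ^ (p - 2) * (x * y)) := by ring
      _ = p * (|x| ^ (p - 2) * (x ^ 2 * t)) := by rw [this]
      _ = p * ((|x| ^ (p - 2) * x ^ 2) * t) := by ring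
      _ = p * (|x| ^ p * t) := by rw [hx2]
    have e3 : |x| ^ (p - 2) * y ^ 2 = |x| ^ p * t ^ 2 := by
      have : y ^ 2 = x ^ 2 * t ^ 2 := by rw [ht]; field_simp
      calc |x| ^ (p - 2) * y ^ 2 = (|x| ^ (p - 2) * x ^ 2) * t ^ 2 := by rw [this]; ring
      _ = |x| ^ p * t ^ 2 := by rw [hx2]
    have hC : (0:ℝ) ≤ |x| ^ p := Real.rpow_nonneg (abs_nonneg x) p
    have hE : (0:ℝ) ≤ |y| ^ p := Real.rpow_nonneg (abs_nonneg y) p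
    have htay := bdg_taylor hp ht1 ht2
    have htay2 := mul_le_mul_of_nonneg_left htay hC
    have expand : |x| ^ p * (1 + p * t + (p * (p - 1) * 2 ^ p) * t ^ 2)
        = |x| ^ p + p * (|x| ^ p * t) + (p * (p - 1) * 2 ^ p) * (|x| ^ p * t ^ 2) := by ring
    rw [expand] at htay2
    rw [e1, e2, e3]
    have h4 : (0:ℝ) ≤ (2 ^ p + p) * (|x| ^ p * t ^ 2) := by positivity
    have h5 : (0:ℝ) ≤ (p * (p - 1) * 2 ^ p + 2 ^ p + p) * |y| ^ p := by
      apply mul_nonneg (by linarith) hE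
    nlinarith [htay2, h4, h5]

lemma bdg_lyapunov {α : Type*} [MeasurableSpace α] {μ : Measure α} [IsProbabilityMeasure μ]
    {f : α → ℝ} (hf : Measurable f) (hnn : ∀ x, 0 ≤ f x) (hint : Integrable f μ)
    {q : ℝ} (hq0 : 0 ≤ q) (hq1 : q ≤ 1) :
    ∫ x, f x ^ q ∂μ ≤ (∫ x, f x ∂μ) ^ q := by
  rcases eq_or_lt_of_le hq0 with hq | hq
  · simp [← hq]
  have hintq : Integrable (fun x => f x ^ q) μ := by
    refine Integrable.mono' ((integrable_const (1:ℝ)).add hint)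
      ((hf.pow_const q).aestronglyMeasurable) (Filter.Eventually.of_forall fun x => ?_)
    rw [Real.norm_eq_abs, abs_of_nonneg (Real.rpow_nonneg (hnn x) q)]
    rcases le_total (f x) 1 with h | h
    · have := Real.rpow_le_one (hnn x) h hq0
      simp only [Pi.add_apply]; linarith [hnn x]
    · have h2 : f x ^ q ≤ f x ^ (1:ℝ) :=
        Real.rpow_le_rpow_of_exponent_le h hq1
      rw [Real.rpow_one] at h2
      simp only [Pi.add_apply]; linarith [hnn x]
  set B := ∫ x, f x ∂μ with hB
  have hB0 : 0 ≤ B := integral_nonneg hnn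
  rcases eq_or_lt_of_le hB0 with hBz | hBpos
  · -- B = 0, so f = 0 a.e.
    have hfz : f =ᵐ[μ] 0 := by
      rw [← integral_eq_zero_iff_of_nonneg hnn hint]; exact hBz.symm
    have : (fun x => f x ^ q) =ᵐ[μ] 0 := by
      filter_upwards [hfz] with x hx
      simp [hx, Real.zero_rpow (ne_of_gt hq)]
    rw [integral_congr_ae this]
    simp [← hBz, Real.zero_rpow (ne_of_gt hq)]
  · have hBq : 0 < B ^ q := Real.rpow_pos_of_pos hBpos q
    have pointw : ∀ x, f x ^ q ≤ (q * (f x / B) + (1 - q)) * B ^ q := by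
      intro x
      have hgeom := Real.geom_mean_le_arith_mean2_weighted hq0 (by linarith : (0:ℝ) ≤ 1 - q)
        (div_nonneg (hnn x) hB0) (zero_le_one) (by ring)
      rw [Real.one_rpow, mul_one, mul_one] at hgeom
      have := mul_le_mul_of_nonneg_right hgeom (le_of_lt hBq)
      rwa [Real.div_rpow (hnn x) hB0, div_mul_cancel₀ _ (ne_of_gt hBq)] at this
    have hint2 : Integrable (fun x => (q * (f x / B) + (1 - q)) * B ^ q) μ := by
      apply Integrable.mul_const
      exact (((hint.div_const B).const_mul q).add (integrable_const (1 - q)))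
    calc ∫ x, f x ^ q ∂μ ≤ ∫ x, (q * (f x / B) + (1 - q)) * B ^ q ∂μ :=
          integral_mono hintq hint2 pointw
    _ = ((q * (B / B) + (1 - q))) * B ^ q := by
        rw [integral_mul_const, integral_add ((hint.div_const B).const_mul q)
          (integrable_const _), integral_const_mul, integral_div, integral_const]
        simp [← hB]
    _ = B ^ q := by
        rw [div_self (ne_of_gt hBpos)]; ring

lemma bdg_numeric {p Cp : ℝ} (hp : 2 ≤ p) (hCp : 1 ≤ Cp) (k : ℕ) :
    (2*Cp)^(p/2) * (k:ℝ)^(p/2) + Cp * ((2*Cp)^(p/2))^((p-2)/p) * (k:ℝ)^((p-2)/2) + Cp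
      ≤ (2*Cp)^(p/2) * ((k:ℝ)+1)^(p/2) := by
  have hp0 : (0:ℝ) < p := by linarith
  have h2C : (1:ℝ) ≤ 2*Cp := by linarith
  have h2C0 : (0:ℝ) < 2*Cp := by linarith
  set K : ℝ := (2*Cp)^(p/2) with hK
  have hK0 : 0 < K := Real.rpow_pos_of_pos h2C0 _
  have hK1 : 1 ≤ K := Real.one_le_rpow h2C (by positivity)
  have hK2p : K ^ (2/p) = 2*Cp := by
    rw [hK, ← Real.rpow_mul h2C0.le]
    rw [show p/2 * (2/p) = 1 by field_simp, Real.rpow_one]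
  have hKq : Cp * K ^ ((p-2)/p) = K / 2 := by
    have h1 : K ^ ((p-2)/p) * K ^ (2/p) = K := by
      rw [← Real.rpow_add hK0, show (p-2)/p + 2/p = 1 by field_simp; ring, Real.rpow_one]
    rw [hK2p] at h1
    have hCp0 : Cp ≠ 0 := by linarith
    field_simp at h1 ⊢
    nlinarith [h1]
  have hCplow : Cp ≤ K / 2 := by
    have : (2*Cp) ^ (1:ℝ) ≤ (2*Cp) ^ (p/2) :=
      Real.rpow_le_rpow_of_exponent_le h2C (by linarith)
    rw [Real.rpow_one] at this
    rw [hK]; linarith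
  rcases Nat.eq_zero_or_pos k with rfl | hkpos
  · -- k = 0
    simp only [Nat.cast_zero]
    rw [Real.zero_rpow (by positivity : p/2 ≠ 0)]
    have h01 : (0:ℝ) ^ ((p-2)/2) ≤ 1 := Real.zero_rpow_le_one _
    have : Cp * K ^ ((p-2)/p) * (0:ℝ) ^ ((p-2)/2) ≤ K/2 := by
      rw [hKq]
      calc K/2 * (0:ℝ) ^ ((p-2)/2) ≤ K/2 * 1 :=
        mul_le_mul_of_nonneg_left h01 (by linarith)
      _ = K/2 := mul_one _
    have hone : ((0:ℝ)+1) ^ (p/2) = 1 := by rw [zero_add, Real.one_rpow]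
    rw [hone]
    linarith
  · have hk1 : (1:ℝ) ≤ (k:ℝ) := by exact_mod_cast hkpos
    have hk0 : (0:ℝ) < (k:ℝ) := by linarith
    -- Bernoulli
    have hinv : (0:ℝ) ≤ 1/(k:ℝ) := by positivity
    have hbern : 1 + (p/2) * (1/(k:ℝ)) ≤ (1 + 1/(k:ℝ)) ^ (p/2) :=
      one_add_mul_self_le_rpow_one_add (by linarith) (by linarith)
    have hkp2 : (0:ℝ) < (k:ℝ) ^ (p/2) := Real.rpow_pos_of_pos hk0 _
    have hmul : ((1 + 1/(k:ℝ)) ^ (p/2)) * (k:ℝ) ^ (p/2) = ((k:ℝ)+1) ^ (p/2) := by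
      rw [← Real.mul_rpow (by positivity) hk0.le]
      congr 1
      field_simp
    have hdiv : (k:ℝ) ^ (p/2) / (k:ℝ) = (k:ℝ) ^ ((p-2)/2) := by
      rw [show (p-2)/2 = p/2 - 1 by ring, Real.rpow_sub hk0, Real.rpow_one]
    have hbern2 : (k:ℝ) ^ (p/2) + (p/2) * (k:ℝ) ^ ((p-2)/2) ≤ ((k:ℝ)+1) ^ (p/2) := by
      have := mul_le_mul_of_nonneg_right hbern hkp2.le
      rw [hmul] at this
      have hexp : (1 + (p/2) * (1/(k:ℝ))) * (k:ℝ) ^ (p/2)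
          = (k:ℝ) ^ (p/2) + (p/2) * ((k:ℝ) ^ (p/2) / (k:ℝ)) := by ring
      rw [hexp, hdiv] at this
      exact this
    have hkq1 : (1:ℝ) ≤ (k:ℝ) ^ ((p-2)/2) := Real.one_le_rpow hk1 (by linarith)
    -- middle terms
    have hmid : Cp * K ^ ((p-2)/p) * (k:ℝ) ^ ((p-2)/2) + Cp ≤ K * (p/2) * (k:ℝ) ^ ((p-2)/2) := by
      rw [hKq]
      have h1 : Cp ≤ K/2 * (k:ℝ) ^ ((p-2)/2) := by
        calc Cp ≤ K/2 := hCplow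
        _ = K/2 * 1 := (mul_one _).symm
        _ ≤ K/2 * (k:ℝ) ^ ((p-2)/2) := mul_le_mul_of_nonneg_left hkq1 (by linarith)
      have h2 : K * (k:ℝ) ^ ((p-2)/2) ≤ K * (p/2) * (k:ℝ) ^ ((p-2)/2) := by
        have : K * 1 ≤ K * (p/2) := mul_le_mul_of_nonneg_left (by linarith) hK0.le
        nlinarith [hkq1, hK0]
      linarith
    calc K * (k:ℝ)^(p/2) + Cp * K ^ ((p-2)/p) * (k:ℝ)^((p-2)/2) + Cp
        ≤ K * (k:ℝ)^(p/2) + K * (p/2) * (k:ℝ)^((p-2)/2) := by linarith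
    _ = K * ((k:ℝ)^(p/2) + (p/2) * (k:ℝ)^((p-2)/2)) := by ring
    _ ≤ K * ((k:ℝ)+1)^(p/2) := mul_le_mul_of_nonneg_left hbern2 hK0.le

theorem bdg_sample_mean_moment (p : ℝ) (hp : 2 ≤ p) :
    ∃ C : ℝ, 0 < C ∧
      ∀ (Ω : Type) (_ : MeasureSpace Ω), IsProbabilityMeasure (ℙ : Measure Ω) →
      ∀ (N : ℕ) (hN : 0 < N) (X : Fin N → Ω → ℝ),
        (∀ n, Measurable (X n)) →
        iIndepFun X ℙ →
        (∀ n, Measure.map (X n) ℙ = Measure.map (X ⟨0, hN⟩) ℙ) →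
        MemLp (X ⟨0, hN⟩) (ENNReal.ofReal p) ℙ →
        (∫ ω, X ⟨0, hN⟩ ω ∂ℙ = 0) →
        ∫ ω, |(N : ℝ)⁻¹ * ∑ n, X n ω| ^ p ∂ℙ ≤
          C * (N : ℝ) ^ (-(p / 2)) * ∫ ω, |X ⟨0, hN⟩ ω| ^ p ∂ℙ := by
  classical
  have hp0 : (0:ℝ) < p := by linarith
  have h2p : (0:ℝ) < (2:ℝ) ^ p := Real.rpow_pos_of_pos (by norm_num) p
  set Cp : ℝ := p * (p - 1) * 2 ^ p + 2 ^ p + p with hCpdef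
  have hCp1 : (1:ℝ) ≤ Cp := by
    have : (0:ℝ) ≤ p * (p - 1) * 2 ^ p := by
      apply mul_nonneg _ h2p.le; nlinarith
    nlinarith
  set K : ℝ := (2 * Cp) ^ (p/2) with hKdef
  have hK0 : 0 < K := Real.rpow_pos_of_pos (by linarith) _
  refine ⟨K, hK0, ?_⟩
  intro Ω mΩ hprob N hN X hmeas hindep hmap hmem hmean
  haveI := hprob
  set X0 : Ω → ℝ := X ⟨0, hN⟩ with hX0
  set m : ℝ := ∫ ω, |X0 ω| ^ p ∂ℙ with hm
  -- identical distribution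
  have hid : ∀ n, IdentDistrib (X n) X0 ℙ ℙ := fun n =>
    ⟨(hmeas n).aemeasurable, (hmeas _).aemeasurable, hmap n⟩
  have hmemn : ∀ n, MemLp (X n) (ENNReal.ofReal p) ℙ := fun n => (hid n).symm.memLp_snd hmem
  have hone_le : (1:ENNReal) ≤ ENNReal.ofReal p := by
    rw [show (1:ENNReal) = ENNReal.ofReal 1 by simp]
    exact ENNReal.ofReal_le_ofReal (by linarith)
  have hintn : ∀ n, Integrable (X n) ℙ := fun n => (hmemn n).integrable hone_le
  have hmeann : ∀ n, ∫ ω, X n ω ∂ℙ = 0 := fun n => ((hid n).integral_eq).trans hmean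
  have habsmeas : Measurable (fun x : ℝ => |x| ^ p) :=
    (measurable_id.abs).pow_const p
  have hmn : ∀ n, ∫ ω, |X n ω| ^ p ∂ℙ = m := fun n =>
    ((hid n).comp habsmeas).integral_eq
  have hm0 : 0 ≤ m := integral_nonneg fun ω => Real.rpow_nonneg (abs_nonneg _) p
  -- integrability of powers
  have hofReal_ne_zero : ENNReal.ofReal p ≠ 0 := by
    simp [ENNReal.ofReal_eq_zero]; linarith
  have habs_int : ∀ f : Ω → ℝ, MemLp f (ENNReal.ofReal p) ℙ →
      Integrable (fun ω => |f ω| ^ p) ℙ := by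
    intro f hf
    have := hf.integrable_norm_rpow hofReal_ne_zero ENNReal.ofReal_ne_top
    simpa [Real.norm_eq_abs, ENNReal.toReal_ofReal hp0.le] using this
  have hpow_int : ∀ f : Ω → ℝ, Measurable f → MemLp f (ENNReal.ofReal p) ℙ →
      ∀ r : ℝ, 0 ≤ r → r ≤ p → Integrable (fun ω => |f ω| ^ r) ℙ := by
    intro f hfm hf r hr0 hrp
    refine Integrable.mono' ((integrable_const (1:ℝ)).add (habs_int f hf))
      ((hfm.abs.pow_const r).aestronglyMeasurable)
      (Filter.Eventually.of_forall fun ω => ?_)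
    rw [Real.norm_eq_abs, abs_of_nonneg (Real.rpow_nonneg (abs_nonneg _) r)]
    rcases le_total |f ω| 1 with h | h
    · have := Real.rpow_le_one (abs_nonneg _) h hr0
      simp only [Pi.add_apply]
      have : (0:ℝ) ≤ |f ω| ^ p := Real.rpow_nonneg (abs_nonneg _) p
      have h2 := Real.rpow_le_one (abs_nonneg (f ω)) h hr0
      linarith
    · have h2 : |f ω| ^ r ≤ |f ω| ^ p := Real.rpow_le_rpow_of_exponent_le h hrp
      simp only [Pi.add_apply]
      linarith
  -- the sum over a finset
  have key : ∀ s : Finset (Fin N),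
      ∫ ω, |∑ n ∈ s, X n ω| ^ p ∂ℙ ≤ K * (s.card : ℝ) ^ (p/2) * m := by
    intro s
    induction s using Finset.induction_on with
    | empty =>
        simp only [Finset.sum_empty, abs_zero, Finset.card_empty, Nat.cast_zero]
        rw [Real.zero_rpow (ne_of_gt hp0), Real.zero_rpow (by positivity : p/2 ≠ 0)]
        simp
    | insert a s ha ih =>
        -- notation
        set A : Ω → ℝ := fun ω => ∑ n ∈ s, X n ω with hA
        set Y : Ω → ℝ := X a with hY
        have hAfun : (∑ n ∈ s, X n) = A := by
          funext ω; simp [hA, Finset.sum_apply]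
        have hAmeas : Measurable A := Finset.measurable_sum s fun n _ => hmeas n
        have hAmem : MemLp A (ENNReal.ofReal p) ℙ :=
          memLp_finset_sum s fun n _ => hmemn n
        have hYmem : MemLp Y (ENNReal.ofReal p) ℙ := hmemn a
        have hYmeas : Measurable Y := hmeas a
        have hindepAY : IndepFun A Y ℙ := by
          rw [← hAfun]
          exact hindep.indepFun_finset_sum_of_notMem hmeas ha
        -- pointwise inequality
        have hptw : ∀ ω, |A ω + Y ω| ^ p ≤ |A ω| ^ p + p * (|A ω| ^ (p-2) * A ω) * Y ω
            + Cp * (|A ω| ^ (p-2) * |Y ω| ^ (2:ℝ) + |Y ω| ^ p) := by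
          intro ω
          have := bdg_pointwise hp (A ω) (Y ω)
          have hsq : (Y ω) ^ 2 = |Y ω| ^ (2:ℝ) := by
            rw [show (2:ℝ) = ((2:ℕ):ℝ) by norm_num, Real.rpow_natCast]
            exact (sq_abs _).symm
          rw [hsq] at this
          exact this
        -- integrability of the pieces
        have hintA : Integrable (fun ω => |A ω| ^ p) ℙ := habs_int A hAmem
        have hintY : Integrable (fun ω => |Y ω| ^ p) ℙ := habs_int Y hYmem
        have hphi_meas : Measurable (fun x : ℝ => |x| ^ (p-2) * x) :=
          ((measurable_id.abs).pow_const (p-2)).mul measurable_id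
        have hphiA_int : Integrable (fun ω => |A ω| ^ (p-2) * A ω) ℙ := by
          refine Integrable.mono' ((integrable_const (1:ℝ)).add hintA)
            ((hphi_meas.comp hAmeas).aestronglyMeasurable)
            (Filter.Eventually.of_forall fun ω => ?_)
          rw [Real.norm_eq_abs, abs_mul, abs_of_nonneg (Real.rpow_nonneg (abs_nonneg _) _)]
          simp only [Pi.add_apply]
          rcases le_total |A ω| 1 with h | h
          · have h1 := Real.rpow_le_one (abs_nonneg (A ω)) h (by linarith : (0:ℝ) ≤ p - 2)
            have h2 : (0:ℝ) ≤ |A ω| ^ p := Real.rpow_nonneg (abs_nonneg _) p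
            nlinarith [abs_nonneg (A ω), Real.rpow_nonneg (abs_nonneg (A ω)) (p-2)]
          · have h0 : (0:ℝ) < |A ω| := by linarith
            have h1 : |A ω| ^ (p-2) * |A ω| = |A ω| ^ (p-1) := by
              nth_rewrite 2 [show |A ω| = |A ω| ^ (1:ℝ) by rw [Real.rpow_one]]
              rw [← Real.rpow_add h0]; ring_nf
            rw [h1]
            have h2 : |A ω| ^ (p-1) ≤ |A ω| ^ p :=
              Real.rpow_le_rpow_of_exponent_le h (by linarith)
            have h3 : (0:ℝ) ≤ |A ω| ^ p := Real.rpow_nonneg (abs_nonneg _) p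
            linarith
        have hA2_int : Integrable (fun ω => |A ω| ^ (p-2)) ℙ :=
          hpow_int A hAmeas hAmem (p-2) (by linarith) (by linarith)
        have hY2_int : Integrable (fun ω => |Y ω| ^ (2:ℝ)) ℙ :=
          hpow_int Y hYmeas hYmem 2 (by norm_num) (by linarith)
        have hYint : Integrable Y ℙ := hintn a
        -- independence of the composed pieces
        have hindep1 : IndepFun (fun ω => |A ω| ^ (p-2) * A ω) Y ℙ :=
          hindepAY.comp hphi_meas measurable_id
        have hindep2 : IndepFun (fun ω => |A ω| ^ (p-2)) (fun ω => |Y ω| ^ (2:ℝ)) ℙ :=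
          hindepAY.comp ((measurable_id.abs).pow_const (p-2))
            ((measurable_id.abs).pow_const 2)
        -- products are integrable
        have hprod1_int : Integrable (fun ω => (|A ω| ^ (p-2) * A ω) * Y ω) ℙ :=
          hindep1.integrable_mul hphiA_int hYint
        have hprod2_int : Integrable (fun ω => |A ω| ^ (p-2) * |Y ω| ^ (2:ℝ)) ℙ :=
          hindep2.integrable_mul hA2_int hY2_int
        -- the RHS is integrable
        have hRHS_int : Integrable (fun ω => |A ω| ^ p + p * (|A ω| ^ (p-2) * A ω) * Y ω
            + Cp * (|A ω| ^ (p-2) * |Y ω| ^ (2:ℝ) + |Y ω| ^ p)) ℙ := by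
          apply Integrable.add
          · apply Integrable.add hintA
            have : (fun ω => p * (|A ω| ^ (p-2) * A ω) * Y ω)
                = fun ω => p * ((|A ω| ^ (p-2) * A ω) * Y ω) := by funext ω; ring
            rw [this]
            exact hprod1_int.const_mul p
          · exact (hprod2_int.add hintY).const_mul Cp
        -- LHS integrable
        have hAYmem : MemLp (fun ω => A ω + Y ω) (ENNReal.ofReal p) ℙ := hAmem.add hYmem
        have hLHS_int : Integrable (fun ω => |A ω + Y ω| ^ p) ℙ := habs_int _ hAYmem
        -- integrate
        have hstep1 : ∫ ω, |A ω + Y ω| ^ p ∂ℙ ≤ ∫ ω, (|A ω| ^ p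
            + p * (|A ω| ^ (p-2) * A ω) * Y ω
            + Cp * (|A ω| ^ (p-2) * |Y ω| ^ (2:ℝ) + |Y ω| ^ p)) ∂ℙ :=
          integral_mono hLHS_int hRHS_int hptw
        -- compute the RHS integral
        have hEphiY : ∫ ω, (|A ω| ^ (p-2) * A ω) * Y ω ∂ℙ = 0 := by
          have := hindep1.integral_mul_eq_mul_integral
            ((hphi_meas.comp hAmeas).aestronglyMeasurable) (hYmeas.aestronglyMeasurable)
          have h2 : ∫ ω, (|A ω| ^ (p-2) * A ω) * Y ω ∂ℙ
              = (∫ ω, |A ω| ^ (p-2) * A ω ∂ℙ) * ∫ ω, Y ω ∂ℙ := this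
          rw [h2, hmeann a, mul_zero]
        have hEprod2 : ∫ ω, |A ω| ^ (p-2) * |Y ω| ^ (2:ℝ) ∂ℙ
            = (∫ ω, |A ω| ^ (p-2) ∂ℙ) * ∫ ω, |Y ω| ^ (2:ℝ) ∂ℙ :=
          hindep2.integral_mul_eq_mul_integral
            (((measurable_id.abs).pow_const (p-2)).comp hAmeas).aestronglyMeasurable
            (((measurable_id.abs).pow_const 2).comp hYmeas).aestronglyMeasurable
        -- abbreviations
        set aS : ℝ := ∫ ω, |A ω| ^ p ∂ℙ with haS
        have haS0 : 0 ≤ aS := integral_nonneg fun ω => Real.rpow_nonneg (abs_nonneg _) p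
        -- Lyapunov bounds
        have hlyapA : ∫ ω, |A ω| ^ (p-2) ∂ℙ ≤ aS ^ ((p-2)/p) := by
          have hq0 : (0:ℝ) ≤ (p-2)/p := div_nonneg (by linarith) hp0.le
          have hq1 : (p-2)/p ≤ 1 := by
            rw [div_le_one hp0]; linarith
          have hly := bdg_lyapunov (μ := (ℙ : Measure Ω)) (f := fun ω => |A ω| ^ p)
            ((hAmeas.abs).pow_const p) (fun ω => Real.rpow_nonneg (abs_nonneg _) p)
            hintA hq0 hq1
          have hptwise : ∀ ω, (|A ω| ^ p) ^ ((p-2)/p) = |A ω| ^ (p-2) := by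
            intro ω
            rw [← Real.rpow_mul (abs_nonneg _)]
            congr 1
            field_simp
          calc ∫ ω, |A ω| ^ (p-2) ∂ℙ = ∫ ω, (|A ω| ^ p) ^ ((p-2)/p) ∂ℙ := by
                apply integral_congr_ae
                exact Filter.Eventually.of_forall fun ω => (hptwise ω).symm
          _ ≤ aS ^ ((p-2)/p) := hly
        have hlyapY : ∫ ω, |Y ω| ^ (2:ℝ) ∂ℙ ≤ m ^ (2/p) := by
          have hq0 : (0:ℝ) ≤ 2/p := by positivity
          have hq1 : 2/p ≤ 1 := by rw [div_le_one hp0]; linarith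
          have hly := bdg_lyapunov (μ := (ℙ : Measure Ω)) (f := fun ω => |Y ω| ^ p)
            ((hYmeas.abs).pow_const p) (fun ω => Real.rpow_nonneg (abs_nonneg _) p)
            hintY hq0 hq1
          have hptwise : ∀ ω, (|Y ω| ^ p) ^ ((2:ℝ)/p) = |Y ω| ^ (2:ℝ) := by
            intro ω
            rw [← Real.rpow_mul (abs_nonneg _)]
            congr 1
            field_simp
          calc ∫ ω, |Y ω| ^ (2:ℝ) ∂ℙ = ∫ ω, (|Y ω| ^ p) ^ ((2:ℝ)/p) ∂ℙ := by
                apply integral_congr_ae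
                exact Filter.Eventually.of_forall fun ω => (hptwise ω).symm
          _ ≤ m ^ (2/p) := by rw [hmn a] at hly; exact hly
        -- put the RHS integral together
        have hintA2nonneg : 0 ≤ ∫ ω, |A ω| ^ (p-2) ∂ℙ :=
          integral_nonneg fun ω => Real.rpow_nonneg (abs_nonneg _) _
        have hintY2nonneg : 0 ≤ ∫ ω, |Y ω| ^ (2:ℝ) ∂ℙ :=
          integral_nonneg fun ω => Real.rpow_nonneg (abs_nonneg _) _
        have hmul1_int : Integrable (fun ω => p * (|A ω| ^ (p-2) * A ω) * Y ω) ℙ := by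
          have e1 : (fun ω => p * (|A ω| ^ (p-2) * A ω) * Y ω)
              = fun ω => p * ((|A ω| ^ (p-2) * A ω) * Y ω) := by funext ω; ring
          rw [e1]; exact hprod1_int.const_mul p
        have h12_int : Integrable (fun ω => |A ω| ^ p + p * (|A ω| ^ (p-2) * A ω) * Y ω) ℙ :=
          hintA.add hmul1_int
        have h3_int : Integrable
            (fun ω => Cp * (|A ω| ^ (p-2) * |Y ω| ^ (2:ℝ) + |Y ω| ^ p)) ℙ :=
          (hprod2_int.add hintY).const_mul Cp
        have hRHS_eq : ∫ ω, (|A ω| ^ p + p * (|A ω| ^ (p-2) * A ω) * Y ω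
            + Cp * (|A ω| ^ (p-2) * |Y ω| ^ (2:ℝ) + |Y ω| ^ p)) ∂ℙ
            = aS + Cp * ((∫ ω, |A ω| ^ (p-2) ∂ℙ) * (∫ ω, |Y ω| ^ (2:ℝ) ∂ℙ) + m) := by
          rw [integral_add h12_int h3_int, integral_add hintA hmul1_int]
          have e2 : ∫ ω, p * (|A ω| ^ (p-2) * A ω) * Y ω ∂ℙ = 0 := by
            have e1 : (fun ω => p * (|A ω| ^ (p-2) * A ω) * Y ω)
                = fun ω => p * ((|A ω| ^ (p-2) * A ω) * Y ω) := by funext ω; ring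
            rw [e1, integral_const_mul, hEphiY, mul_zero]
          rw [e2, add_zero, integral_const_mul, integral_add hprod2_int hintY, hEprod2, hmn a]
        have hstep2 : ∫ ω, |A ω + Y ω| ^ p ∂ℙ
            ≤ aS + Cp * (aS ^ ((p-2)/p) * m ^ (2/p) + m) := by
          rw [hRHS_eq] at hstep1
          have hm2p : 0 ≤ m ^ (2/p) := Real.rpow_nonneg hm0 _
          have h1 : (∫ ω, |A ω| ^ (p-2) ∂ℙ) * (∫ ω, |Y ω| ^ (2:ℝ) ∂ℙ)
              ≤ aS ^ ((p-2)/p) * m ^ (2/p) := by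
            apply mul_le_mul hlyapA hlyapY hintY2nonneg (Real.rpow_nonneg haS0 _)
          have hCp0 : (0:ℝ) ≤ Cp := by linarith
          have h2 := mul_le_mul_of_nonneg_left (add_le_add_left h1 m) hCp0
          exact hstep1.trans (add_le_add_right h2 aS)
        -- now apply IH and the numeric lemma
        set k : ℕ := s.card with hk
        have hbound : aS ≤ K * (k:ℝ) ^ (p/2) * m := ih
        have hq0' : (0:ℝ) ≤ (p-2)/p := div_nonneg (by linarith) hp0.le
        have hmono : aS ^ ((p-2)/p) ≤ (K * (k:ℝ) ^ (p/2) * m) ^ ((p-2)/p) :=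
          Real.rpow_le_rpow haS0 hbound hq0'
        have hkc0 : (0:ℝ) ≤ (k:ℝ) := Nat.cast_nonneg k
        have hexpand : (K * (k:ℝ) ^ (p/2) * m) ^ ((p-2)/p) * m ^ (2/p)
            = K ^ ((p-2)/p) * (k:ℝ) ^ ((p-2)/2) * m := by
          have h1 : (K * (k:ℝ) ^ (p/2) * m) ^ ((p-2)/p)
              = K ^ ((p-2)/p) * ((k:ℝ) ^ (p/2)) ^ ((p-2)/p) * m ^ ((p-2)/p) := by
            rw [Real.mul_rpow (mul_nonneg hK0.le (Real.rpow_nonneg hkc0 _)) hm0,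
              Real.mul_rpow hK0.le (Real.rpow_nonneg hkc0 _)]
          have h2 : ((k:ℝ) ^ (p/2)) ^ ((p-2)/p) = (k:ℝ) ^ ((p-2)/2) := by
            rw [← Real.rpow_mul hkc0]
            congr 1
            field_simp
          have h3 : m ^ ((p-2)/p) * m ^ (2/p) = m := by
            rcases eq_or_lt_of_le hm0 with h0 | hmp
            · rw [← h0, Real.zero_rpow (by positivity : (2:ℝ)/p ≠ 0), mul_zero]
            · rw [← Real.rpow_add hmp, show (p-2)/p + 2/p = 1 by field_simp; ring]
              exact Real.rpow_one m
          calc (K * (k:ℝ) ^ (p/2) * m) ^ ((p-2)/p) * m ^ (2/p)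
              = K ^ ((p-2)/p) * (k:ℝ) ^ ((p-2)/2) * (m ^ ((p-2)/p) * m ^ (2/p)) := by
                rw [h1, h2]; ring
          _ = K ^ ((p-2)/p) * (k:ℝ) ^ ((p-2)/2) * m := by rw [h3]
        have h5 : aS ^ ((p-2)/p) * m ^ (2/p) ≤ K ^ ((p-2)/p) * (k:ℝ) ^ ((p-2)/2) * m := by
          rw [← hexpand]
          exact mul_le_mul_of_nonneg_right hmono (Real.rpow_nonneg hm0 _)
        have hCp0 : (0:ℝ) ≤ Cp := by linarith
        have h6 := mul_le_mul_of_nonneg_left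
          (add_le_add_right h5 m) hCp0
        have h7 := mul_le_mul_of_nonneg_right (bdg_numeric hp hCp1 k) hm0
        rw [← hKdef] at h7
        have hsum : ∀ ω, ∑ n ∈ insert a s, X n ω = A ω + Y ω := by
          intro ω
          rw [Finset.sum_insert ha]
          exact add_comm (X a ω) _
        have hcardins : ((insert a s).card : ℝ) = (k:ℝ) + 1 := by
          rw [Finset.card_insert_of_notMem ha]
          push_cast
          rfl
        calc ∫ ω, |∑ n ∈ insert a s, X n ω| ^ p ∂ℙ
            = ∫ ω, |A ω + Y ω| ^ p ∂ℙ := by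
              apply integral_congr_ae
              refine Filter.Eventually.of_forall fun ω => ?_
              show |∑ n ∈ insert a s, X n ω| ^ p = |A ω + Y ω| ^ p
              rw [hsum ω]
        _ ≤ aS + Cp * (aS ^ ((p-2)/p) * m ^ (2/p) + m) := hstep2
        _ ≤ K * (k:ℝ) ^ (p/2) * m
              + Cp * (K ^ ((p-2)/p) * (k:ℝ) ^ ((p-2)/2) * m + m) := by linarith
        _ = (K * (k:ℝ) ^ (p/2) + Cp * K ^ ((p-2)/p) * (k:ℝ) ^ ((p-2)/2) + Cp) * m := by
              ring
        _ ≤ K * ((k:ℝ) + 1) ^ (p/2) * m := by linarith [h7]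
        _ = K * ((insert a s).card : ℝ) ^ (p/2) * m := by rw [hcardins]
  -- final assembly
  have hNpos : (0:ℝ) < (N:ℝ) := by exact_mod_cast hN
  have hkey := key Finset.univ
  have hcard : ((Finset.univ : Finset (Fin N)).card : ℝ) = (N:ℝ) := by
    simp
  rw [hcard] at hkey
  have hptfinal : ∀ ω, |(N : ℝ)⁻¹ * ∑ n, X n ω| ^ p
      = (N:ℝ) ^ (-p) * |∑ n, X n ω| ^ p := by
    intro ω
    rw [abs_mul, abs_of_nonneg (inv_nonneg.mpr hNpos.le),
      Real.mul_rpow (inv_nonneg.mpr hNpos.le) (abs_nonneg _),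
      Real.inv_rpow hNpos.le, ← Real.rpow_neg hNpos.le]
  have hSnonneg : 0 ≤ ∫ ω, |∑ n, X n ω| ^ p ∂ℙ :=
    integral_nonneg fun ω => Real.rpow_nonneg (abs_nonneg _) p
  have hNp : (0:ℝ) ≤ (N:ℝ) ^ (-p) := Real.rpow_nonneg hNpos.le _
  calc ∫ ω, |(N : ℝ)⁻¹ * ∑ n, X n ω| ^ p ∂ℙ
      = ∫ ω, (N:ℝ) ^ (-p) * |∑ n, X n ω| ^ p ∂ℙ := by
        apply integral_congr_ae
        exact Filter.Eventually.of_forall fun ω => hptfinal ω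
  _ = (N:ℝ) ^ (-p) * ∫ ω, |∑ n, X n ω| ^ p ∂ℙ := integral_const_mul _ _
  _ ≤ (N:ℝ) ^ (-p) * (K * (N:ℝ) ^ (p/2) * m) := mul_le_mul_of_nonneg_left hkey hNp
  _ = K * ((N:ℝ) ^ (-p) * (N:ℝ) ^ (p/2)) * m := by ring
  _ = K * (N:ℝ) ^ (-(p/2)) * m := by
        rw [← Real.rpow_add hNpos, show -p + p/2 = -(p/2) by ring]
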